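/- Let {x_n}, {y_n}, {z_n} be complex sequences indexed by nonzero integers satisfying the trilinear system and parity. Then for every integer n ≥ 2 and every m with 1 ≤ m ≤ n−1, one has (|x_m|² − |z_m|²)·y_n = (|x_{n−m}|² − |z_{n−m}|²)·y_n and (|x_m|² − |y_m|²)·z_n = (|x_{n−m}|² − |y_{n−m}|²)·z_n. -/

import Mathlib

theorem stmt_7 (x y z : ℤ → ℂ)
    (hsys : ∀ n1 n2 : ℤ, n1 ≠ 0 → n2 ≠ 0 → n1 + n2 ≠ 0 →
      x n1 * y n2 - x (n1 + n2) * z n2 + y (n1 + n2) * z (-n1) = 0)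
    (hpar : ∀ n : ℤ, x (-n) = (starRingEnd ℂ) (x n) ∧ y (-n) = (starRingEnd ℂ) (y n) ∧
      z (-n) = (starRingEnd ℂ) (z n)) :
    ∀ n m : ℤ, 2 ≤ n → 1 ≤ m → m ≤ n - 1 →
      ((‖x m‖ ^ 2 - ‖z m‖ ^ 2 : ℝ) : ℂ) * y n
        = ((‖x (n - m)‖ ^ 2 - ‖z (n - m)‖ ^ 2 : ℝ) : ℂ) * y n ∧
      ((‖x m‖ ^ 2 - ‖y m‖ ^ 2 : ℝ) : ℂ) * z n
        = ((‖x (n - m)‖ ^ 2 - ‖y (n - m)‖ ^ 2 : ℝ) : ℂ) * z n := by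
  intro n m hn hm hmn
  have hm0 : m ≠ 0 := by omega
  have hnm0 : n - m ≠ 0 := by omega
  have hn0 : n ≠ 0 := by omega
  -- A
  have hA : x m * y (n - m) - x n * z (n - m) + y n * (starRingEnd ℂ) (z m) = 0 := by
    have h := hsys m (n - m) hm0 hnm0 (by omega)
    rw [show m + (n - m) = n by ring, (hpar m).2.2] at h
    exact h
  -- B
  have hB : x (n - m) * y m - x n * z m + y n * (starRingEnd ℂ) (z (n - m)) = 0 := by
    have h := hsys (n - m) m hnm0 hm0 (by omega)
    rw [show n - m + m = n by ring, (hpar (n - m)).2.2] at h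
    exact h
  -- F
  have hF : (starRingEnd ℂ) (x m) * y n - x (n - m) * z n + y (n - m) * z m = 0 := by
    have h := hsys (-m) n (by omega) hn0 (by omega)
    rw [show -m + n = n - m by ring, neg_neg, (hpar m).1] at h
    exact h
  -- G
  have hG : (starRingEnd ℂ) (x (n - m)) * y n - x m * z n + y m * z (n - m) = 0 := by
    have h := hsys (-(n - m)) n (by omega) hn0 (by omega)
    rw [show -(n - m) + n = m by ring, neg_neg, (hpar (n - m)).1] at h
    exact h
  -- J
  have hJ : (starRingEnd ℂ) (x n) * y m - (starRingEnd ℂ) (x (n - m)) * z m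
      + (starRingEnd ℂ) (y (n - m)) * z n = 0 := by
    have h := hsys (-n) m (by omega) hm0 (by omega)
    rw [show -n + m = -(n - m) by ring, neg_neg, (hpar n).1, (hpar (n - m)).1,
      (hpar (n - m)).2.1] at h
    exact h
  -- K
  have hK : (starRingEnd ℂ) (x n) * y (n - m) - (starRingEnd ℂ) (x m) * z (n - m)
      + (starRingEnd ℂ) (y m) * z n = 0 := by
    have h := hsys (-n) (n - m) (by omega) hnm0 (by omega)
    rw [show -n + (n - m) = -m by ring, neg_neg, (hpar n).1, (hpar m).1, (hpar m).2.1] at h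
    exact h
  constructor
  · push_cast [Complex.sq_norm]
    rw [← Complex.mul_conj, ← Complex.mul_conj, ← Complex.mul_conj, ← Complex.mul_conj]
    linear_combination x m * hF - x (n - m) * hG - z m * hA + z (n - m) * hB
  · push_cast [Complex.sq_norm]
    rw [← Complex.mul_conj, ← Complex.mul_conj, ← Complex.mul_conj, ← Complex.mul_conj]
    linear_combination (starRingEnd ℂ) (x (n - m)) * hF - (starRingEnd ℂ) (x m) * hG
      - y m * hK + y (n - m) * hJ
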